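/- Escalation occurs in the 0,1-game: there exist a strategy st_A full for agent A and a strategy st_B full for agent B, both with st2g(st_A, A) = st2g(st_B, B) = g01 (so the family is consistent), such that their sum st_A ⊕ st_B is not a convergent strategy profile. -/

import Mathlib

/-- The two agents of the game. -/
inductive Agent : Type
  | A
  | B

/-- The two choices: down and right. -/
inductive Choice : Type
  | d
  | r

/-- Payoff assignments for the agents. -/
abbrev Payoffs : Type := Agent → ℝ

/-! ### Strategy profiles: final coalgebra of `X ↦ ℝ^P + P × Choice × X × X` -/

def StratProfF : PFunctor.{0} :=
  ⟨Payoffs ⊕ (Agent × Choice), fun x =>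
    match x with
    | Sum.inl _ => Empty
    | Sum.inr _ => Bool⟩

/-- Strategy profiles: the final coalgebra (M-type) of `StratProfF`. -/
abbrev StratProf : Type := StratProfF.M

/-- Leaf strategy profile `⟨⟨f⟩⟩`. -/
def sleaf (f : Payoffs) : StratProf :=
  PFunctor.M.mk ⟨Sum.inl f, fun (e : Empty) => e.elim⟩

/-- Node strategy profile `⟨⟨p, c, s_d, s_r⟩⟩` (`true` child = down, `false` child = right). -/
def snode (p : Agent) (c : Choice) (sd sr : StratProf) : StratProf :=
  PFunctor.M.mk ⟨Sum.inr (p, c), fun (b : Bool) => if b then sd else sr⟩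

/-- Convergence `↓s`: the least predicate closed under the given rules. -/
inductive Conv : StratProf → Prop
  | leaf (f : Payoffs) : Conv (sleaf f)
  | down (p : Agent) (sd sr : StratProf) : Conv sd → Conv (snode p Choice.d sd sr)
  | right (p : Agent) (sd sr : StratProf) : Conv sr → Conv (snode p Choice.r sd sr)

/-- One step of the strong-convergence condition. -/
def SConvStep (R : StratProf → Prop) (s : StratProf) : Prop :=
  (∃ f, s = sleaf f) ∨
    ∃ p c sd sr, s = snode p c sd sr ∧ Conv s ∧ R sd ∧ R sr

/-- Strong convergence `⇓s`: the largest predicate `R` with `R ≤ SConvStep R`. -/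
def SConv (s : StratProf) : Prop :=
  ∃ R : StratProf → Prop, R s ∧ ∀ t, R t → SConvStep R t

/-- One step of the `□Φ` condition. -/
def BoxStep (Φ : StratProf → Prop) (R : StratProf → Prop) (t : StratProf) : Prop :=
  Φ t ∧ ∀ p c sd sr, t = snode p c sd sr → R sd ∧ R sr

/-- The modality `□Φ`: the largest predicate `R` with `R ≤ BoxStep Φ R`. -/
def Box (Φ : StratProf → Prop) (s : StratProf) : Prop :=
  ∃ R : StratProf → Prop, R s ∧ ∀ t, R t → BoxStep Φ R t

/-- The partial payoff function `ŝ`, as an inductively defined graph relation: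
`PayoffRel s f` means "`ŝ` is defined and equals `f`". -/
inductive PayoffRel : StratProf → Payoffs → Prop
  | leaf (f : Payoffs) : PayoffRel (sleaf f) f
  | down (p : Agent) (sd sr : StratProf) (f : Payoffs) :
      PayoffRel sd f → PayoffRel (snode p Choice.d sd sr) f
  | right (p : Agent) (sd sr : StratProf) (f : Payoffs) :
      PayoffRel sr f → PayoffRel (snode p Choice.r sd sr) f

/-- Bisimilarity `s' ~ s`: the largest relation satisfying the coinductive clauses. -/
def Bisim (s' s : StratProf) : Prop :=
  ∃ R : StratProf → StratProf → Prop, R s' s ∧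
    ∀ t' t, R t' t →
      ((∃ f, t' = sleaf f ∧ t = sleaf f) ∨
        ∃ p c td' tr' td tr,
          t' = snode p c td' tr' ∧ t = snode p c td tr ∧ R td' td ∧ R tr' tr)

/-- The subprofile relation `s' ≼ s`: the least relation closed under the given rules. -/
inductive Subprof : StratProf → StratProf → Prop
  | bisim {s' s : StratProf} : Bisim s' s → Subprof s' s
  | down {s' : StratProf} {p : Agent} {c : Choice} {sd sr : StratProf} :
      Subprof s' sd → Subprof s' (snode p c sd sr)
  | right {s' : StratProf} {p : Agent} {c : Choice} {sd sr : StratProf} :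
      Subprof s' sr → Subprof s' (snode p c sd sr)

/-! ### Games: final coalgebra of `X ↦ ℝ^P + P × X × X` -/

def GameF : PFunctor.{0} :=
  ⟨Payoffs ⊕ Agent, fun x =>
    match x with
    | Sum.inl _ => Empty
    | Sum.inr _ => Bool⟩

/-- Games: the final coalgebra (M-type) of `GameF`. -/
abbrev Game : Type := GameF.M

/-- Leaf game `⟨f⟩`. -/
def gleaf (f : Payoffs) : Game :=
  PFunctor.M.mk ⟨Sum.inl f, fun (e : Empty) => e.elim⟩

/-- Node game `⟨p, g_d, g_r⟩`. -/
def gnode (p : Agent) (gd gr : Game) : Game :=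
  PFunctor.M.mk ⟨Sum.inr p, fun (b : Bool) => if b then gd else gr⟩

/-- The corecursive function `game : StratProf → Game` erasing the choices. -/
def gameOf : StratProf → Game :=
  PFunctor.M.corec (fun s =>
    match PFunctor.M.dest s with
    | ⟨Sum.inl f, _⟩ => ⟨Sum.inl f, fun (e : Empty) => e.elim⟩
    | ⟨Sum.inr pc, k⟩ => ⟨Sum.inr pc.1, k⟩)

/-! ### Strategies: final coalgebra of `X ↦ ℝ^P + (P + Choice) × X × X` -/

def StratF : PFunctor.{0} :=
  ⟨Payoffs ⊕ (Agent ⊕ Choice), fun x =>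
    match x with
    | Sum.inl _ => Empty
    | Sum.inr _ => Bool⟩

/-- Strategies: the final coalgebra (M-type) of `StratF`. -/
abbrev Strat : Type := StratF.M

/-- Leaf strategy `⟨f⟩`. -/
def stleaf (f : Payoffs) : Strat :=
  PFunctor.M.mk ⟨Sum.inl f, fun (e : Empty) => e.elim⟩

/-- Node strategy `⟨x, st₁, st₂⟩` with `x` an agent or a choice. -/
def stnode (x : Agent ⊕ Choice) (s1 s2 : Strat) : Strat :=
  PFunctor.M.mk ⟨Sum.inr x, fun (b : Bool) => if b then s1 else s2⟩

/-- The corecursive function `st2g` replacing choice labels by the given agent. -/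
def st2gStep (p : Agent) (t : Strat) : GameF.Obj Strat :=
  match PFunctor.M.dest t with
  | ⟨Sum.inl f, _⟩ => ⟨Sum.inl f, fun (e : Empty) => e.elim⟩
  | ⟨Sum.inr (Sum.inl q), k⟩ => ⟨Sum.inr q, k⟩
  | ⟨Sum.inr (Sum.inr _), k⟩ => ⟨Sum.inr p, k⟩

/-- The corecursive function `st2g` replacing choice labels by the given agent. -/
def st2g (st : Strat) (p : Agent) : Game :=
  PFunctor.M.corec (st2gStep p) st

/-- `st` is full for `p`: coinductively, the agent `p` occurs nowhere as a label. -/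
def Full (p : Agent) (st : Strat) : Prop :=
  ∃ R : Strat → Prop, R st ∧ ∀ t, R t →
    (∃ f, t = stleaf f) ∨
      ∃ x s1 s2, t = stnode x s1 s2 ∧ x ≠ Sum.inl p ∧ R s1 ∧ R s2

/-- A one-level view of a strategy. -/
inductive StratView : Type
  | leaf (f : Payoffs)
  | node (x : Agent ⊕ Choice) (k : Bool → Strat)

/-- Destruct a strategy into its one-level view. -/
def stratView (t : Strat) : StratView :=
  match PFunctor.M.dest t with
  | ⟨Sum.inl f, _⟩ => StratView.leaf f
  | ⟨Sum.inr x, k⟩ => StratView.node x k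

/-- One corecursion step for the sum of the strategy of `A` (first component)
and the strategy of `B` (second component). -/
def oplusStep : Strat × Strat → StratProfF.Obj (Strat × Strat) := fun q =>
  match stratView q.1, stratView q.2 with
  | StratView.leaf f, _ => ⟨Sum.inl f, fun (e : Empty) => e.elim⟩
  | StratView.node _ _, StratView.leaf f => ⟨Sum.inl f, fun (e : Empty) => e.elim⟩
  | StratView.node (Sum.inr c) k1, StratView.node (Sum.inl p') k2 =>
      ⟨Sum.inr (p', c), fun (b : Bool) => (k1 b, k2 b)⟩
  | StratView.node (Sum.inr c) k1, StratView.node (Sum.inr _) k2 =>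
      ⟨Sum.inr (Agent.A, c), fun (b : Bool) => (k1 b, k2 b)⟩
  | StratView.node (Sum.inl p') k1, StratView.node (Sum.inr c) k2 =>
      ⟨Sum.inr (p', c), fun (b : Bool) => (k1 b, k2 b)⟩
  | StratView.node (Sum.inl p') k1, StratView.node (Sum.inl _) k2 =>
      ⟨Sum.inr (p', Choice.d), fun (b : Bool) => (k1 b, k2 b)⟩

/-- The sum `st_A ⊕ st_B` of the strategies of the two agents. -/
def oplus (stA stB : Strat) : StratProf :=
  PFunctor.M.corec oplusStep (stA, stB)

/-! ### Equilibria -/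

/-- The local equilibrium condition `PE`. -/
def PE (s : StratProf) : Prop :=
  SConv s ∧
    (∀ p sd sr fd fr, s = snode p Choice.d sd sr →
        PayoffRel sd fd → PayoffRel sr fr → fd p ≥ fr p) ∧
    (∀ p sd sr fd fr, s = snode p Choice.r sd sr →
        PayoffRel sd fd → PayoffRel sr fr → fr p ≥ fd p)

/-- Subgame perfect equilibrium: `SPE = □PE`. -/
def SPE : StratProf → Prop := Box PE

/-- Convertibility `s ⊢p⊣ s'`: the inductively defined deviation relation of agent `p`. -/
inductive Convert (p : Agent) : StratProf → StratProf → Prop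
  | bisim {s s' : StratProf} : Bisim s s' → Convert p s s'
  | own {c c' : Choice} {s1 s2 s1' s2' : StratProf} :
      Convert p s1 s1' → Convert p s2 s2' →
      Convert p (snode p c s1 s2) (snode p c' s1' s2')
  | other {p' : Agent} {c : Choice} {s1 s2 s1' s2' : StratProf} :
      Convert p s1 s1' → Convert p s2 s2' →
      Convert p (snode p' c s1 s2) (snode p' c s1' s2')

/-- Nash equilibrium: no agent can improve her payoff by converting
(the inequality being required whenever both payoffs are defined). -/
def Nash (s : StratProf) : Prop :=
  ∀ p s' f f', Convert p s s' → PayoffRel s f → PayoffRel s' f' → f p ≥ f' p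

/-! ### The 0,1-game -/

/-- The payoff function `A ↦ 0, B ↦ 1`. -/
def f01 : Payoffs := fun p => match p with | Agent.A => 0 | Agent.B => 1

/-- The payoff function `A ↦ 1, B ↦ 0`. -/
def f10 : Payoffs := fun p => match p with | Agent.A => 1 | Agent.B => 0

/-- `S01 true = S0` and `S01 false = S1`: the largest pair of predicates
characterizing the strategy profiles of the 0,1-game. -/
def S01 (i : Bool) (s : StratProf) : Prop :=
  ∃ R : Bool → StratProf → Prop, R i s ∧
    (∀ t, R true t → ∃ c s', t = snode Agent.A c (sleaf f01) s' ∧ R false s') ∧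
    (∀ t, R false t → ∃ c s', t = snode Agent.B c (sleaf f10) s' ∧ R true s')

def S0 : StratProf → Prop := S01 true
def S1 : StratProf → Prop := S01 false

/-- One step of the `AcBes` condition. -/
def AcBesStep (R : StratProf → Prop) (s : StratProf) : Prop :=
  ∀ p c f s', s = snode p c (sleaf f) s' →
    (p = Agent.A ∧ f = f01 ∧ c = Choice.r ∧ R s') ∨
    (p = Agent.B ∧ f = f10 ∧ (c = Choice.d ∨ R s'))

/-- `AcBes`: "A continues and B eventually stops", the least predicate `R`
such that `AcBesStep R ≤ R` (impredicative encoding of the least fixed point). -/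
def AcBes (s : StratProf) : Prop :=
  ∀ R : StratProf → Prop, (∀ t, AcBesStep R t → R t) → R s

/-- One step of the `BcAes` condition. -/
def BcAesStep (R : StratProf → Prop) (s : StratProf) : Prop :=
  ∀ p c f s', s = snode p c (sleaf f) s' →
    (p = Agent.B ∧ f = f10 ∧ c = Choice.r ∧ R s') ∨
    (p = Agent.A ∧ f = f01 ∧ (c = Choice.d ∨ R s'))

/-- `BcAes`: "B continues and A eventually stops", symmetric to `AcBes`. -/
def BcAes (s : StratProf) : Prop :=
  ∀ R : StratProf → Prop, (∀ t, BcAesStep R t → R t) → R s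

def SAcBes : StratProf → Prop := Box AcBes
def SBcAes : StratProf → Prop := Box BcAes

/-! ### The 0,1-game `g01`, the escalation strategies and the all-continue profile -/

/-- Corecursion step for `g01` and `g10`:
`inl true ↦ g01`, `inl false ↦ g10`, `inr true ↦ ⟨f01⟩`, `inr false ↦ ⟨f10⟩`. -/
def g01Step : Bool ⊕ Bool → GameF.Obj (Bool ⊕ Bool)
  | Sum.inl true => ⟨Sum.inr Agent.A, fun (b : Bool) => if b then Sum.inr true else Sum.inl false⟩
  | Sum.inl false => ⟨Sum.inr Agent.B, fun (b : Bool) => if b then Sum.inr false else Sum.inl true⟩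
  | Sum.inr true => ⟨Sum.inl f01, fun (e : Empty) => e.elim⟩
  | Sum.inr false => ⟨Sum.inl f10, fun (e : Empty) => e.elim⟩

/-- The 0,1-game: `g01 = ⟨A, ⟨f01⟩, g10⟩` where `g10 = ⟨B, ⟨f10⟩, g01⟩`. -/
def g01 : Game := PFunctor.M.corec g01Step (Sum.inl true)

/-- `g10 = ⟨B, ⟨f10⟩, g01⟩`. -/
def g10 : Game := PFunctor.M.corec g01Step (Sum.inl false)

/-- Corecursion step for `st_{A,∞} = ⟨r, ⟨f01⟩, ⟨B, ⟨f10⟩, st_{A,∞}⟩⟩`. -/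
def stAinfStep : ℕ → StratF.Obj ℕ
  | 0 => ⟨Sum.inr (Sum.inr Choice.r), fun (b : Bool) => if b then 2 else 1⟩
  | 1 => ⟨Sum.inr (Sum.inl Agent.B), fun (b : Bool) => if b then 3 else 0⟩
  | 2 => ⟨Sum.inl f01, fun (e : Empty) => e.elim⟩
  | _ => ⟨Sum.inl f10, fun (e : Empty) => e.elim⟩

/-- The escalation strategy of `A`: `st_{A,∞} = ⟨r, ⟨f01⟩, ⟨B, ⟨f10⟩, st_{A,∞}⟩⟩`. -/
def stAinf : Strat := PFunctor.M.corec stAinfStep 0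

/-- Corecursion step for `st_{B,∞} = ⟨A, ⟨f01⟩, ⟨r, ⟨f10⟩, st_{B,∞}⟩⟩`. -/
def stBinfStep : ℕ → StratF.Obj ℕ
  | 0 => ⟨Sum.inr (Sum.inl Agent.A), fun (b : Bool) => if b then 2 else 1⟩
  | 1 => ⟨Sum.inr (Sum.inr Choice.r), fun (b : Bool) => if b then 3 else 0⟩
  | 2 => ⟨Sum.inl f01, fun (e : Empty) => e.elim⟩
  | _ => ⟨Sum.inl f10, fun (e : Empty) => e.elim⟩

/-- The escalation strategy of `B`: `st_{B,∞} = ⟨A, ⟨f01⟩, ⟨r, ⟨f10⟩, st_{B,∞}⟩⟩`. -/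
def stBinf : Strat := PFunctor.M.corec stBinfStep 0

/-- Corecursion step for the all-continue profile
`s_{A,∞} = ⟨⟨A, r, ⟨⟨f01⟩⟩, s_{B,∞}⟩⟩`, `s_{B,∞} = ⟨⟨B, r, ⟨⟨f10⟩⟩, s_{A,∞}⟩⟩`. -/
def sAinfStep : ℕ → StratProfF.Obj ℕ
  | 0 => ⟨Sum.inr (Agent.A, Choice.r), fun (b : Bool) => if b then 2 else 1⟩
  | 1 => ⟨Sum.inr (Agent.B, Choice.r), fun (b : Bool) => if b then 3 else 0⟩
  | 2 => ⟨Sum.inl f01, fun (e : Empty) => e.elim⟩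
  | _ => ⟨Sum.inl f10, fun (e : Empty) => e.elim⟩

/-- The all-continue profile `s_{A,∞}` of the 0,1-game. -/
def sAinf : StratProf := PFunctor.M.corec sAinfStep 0

/-- The profile `s_{B,∞}`. -/
def sBinf : StratProf := PFunctor.M.corec sAinfStep 1

/-- `s_□r`, the profile of the 0,1-game where both agents continue forever
(it satisfies `s_□r = ⟨⟨A, r, ⟨⟨f01⟩⟩, ⟨⟨B, r, ⟨⟨f10⟩⟩, s_□r⟩⟩⟩⟩`). -/
def sBoxr : StratProf := sAinf

/-- `s_{d□r} = ⟨⟨A, d, ⟨⟨f01⟩⟩, ⟨⟨B, r, ⟨⟨f10⟩⟩, s_□r⟩⟩⟩⟩`. -/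
def sdBoxr : StratProf :=
  snode Agent.A Choice.d (sleaf f01) (snode Agent.B Choice.r (sleaf f10) sBoxr)

/-! ### Finite games and profiles -/

/-- Finite strategy profiles. -/
inductive FinStratProf : Type
  | leaf (f : Payoffs)
  | node (p : Agent) (c : Choice) (sd sr : FinStratProf)

/-- Finite games. -/
inductive FinGame : Type
  | leaf (f : Payoffs)
  | node (p : Agent) (gd gr : FinGame)

/-- The (total) payoff function of a finite strategy profile. -/
def fpayoff : FinStratProf → Payoffs
  | FinStratProf.leaf f => f
  | FinStratProf.node _ Choice.d sd _ => fpayoff sd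
  | FinStratProf.node _ Choice.r _ sr => fpayoff sr

/-- The game of a finite strategy profile (erasing the choices). -/
def fgame : FinStratProf → FinGame
  | FinStratProf.leaf f => FinGame.leaf f
  | FinStratProf.node p _ sd sr => FinGame.node p (fgame sd) (fgame sr)

/-- Backward induction for finite strategy profiles. -/
inductive BI : FinStratProf → Prop
  | leaf (f : Payoffs) : BI (FinStratProf.leaf f)
  | node (p : Agent) (c : Choice) (sd sr : FinStratProf) :
      BI sd → BI sr →
      (c = Choice.d → fpayoff sd p ≥ fpayoff sr p) →
      (c = Choice.r → fpayoff sr p ≥ fpayoff sd p) →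
      BI (FinStratProf.node p c sd sr)

/-- The family `F01` of finite truncations of the 0,1-game (cut after `B`). -/
inductive F01 : FinGame → Prop
  | base : F01 (FinGame.leaf f01)
  | step (g : FinGame) : F01 g →
      F01 (FinGame.node Agent.A (FinGame.leaf f01) (FinGame.node Agent.B (FinGame.leaf f10) g))

/-- `SF01`: agent B always continues, agent A does whatever she likes. -/
inductive SF01 : FinStratProf → Prop
  | base : SF01 (FinStratProf.leaf f01)
  | step (c : Choice) (s' : FinStratProf) : SF01 s' →
      SF01 (FinStratProf.node Agent.A c (FinStratProf.leaf f01)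
        (FinStratProf.node Agent.B Choice.r (FinStratProf.leaf f10) s'))

mutual
  /-- The family `K01` of finite truncations of the 0,1-game (cut after `A`). -/
  inductive K01 : FinGame → Prop
    | step (g : FinGame) : K01' g → K01 (FinGame.node Agent.A (FinGame.leaf f01) g)
  /-- The auxiliary family `K01'`. -/
  inductive K01' : FinGame → Prop
    | base : K01' (FinGame.leaf f10)
    | step (g : FinGame) : K01 g → K01' (FinGame.node Agent.B (FinGame.leaf f10) g)
end

mutual
  /-- `SK01`: agent A always continues, agent B does whatever she likes. -/
  inductive SK01 : FinStratProf → Prop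
    | step (s' : FinStratProf) : SK01' s' →
        SK01 (FinStratProf.node Agent.A Choice.r (FinStratProf.leaf f01) s')
  /-- The auxiliary predicate `SK01'`. -/
  inductive SK01' : FinStratProf → Prop
    | base : SK01' (FinStratProf.leaf f10)
    | step (c : Choice) (s' : FinStratProf) : SK01 s' →
        SK01' (FinStratProf.node Agent.B c (FinStratProf.leaf f10) s')
end

/-! ### Auxiliary machinery -/

/-- A corec unfolds to an `M.mk`. -/
lemma corec_eq {α : Type} {P : PFunctor.{0}} (g : α → P.Obj α) (x : α) :
    PFunctor.M.corec g x = PFunctor.M.mk (P.map (PFunctor.M.corec g) (g x)) := by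
  rw [← PFunctor.M.dest_corec, PFunctor.M.mk_dest]

lemma stleaf_corec {α : Type} (g : α → StratF.Obj α) (x : α) (f : Payoffs)
    (h : g x = ⟨Sum.inl f, fun e => e.elim⟩) :
    PFunctor.M.corec g x = stleaf f := by
  rw [corec_eq, h]; unfold stleaf; congr 1
  simp only [PFunctor.map]; congr 1
  funext e; exact e.elim

lemma stnode_corec {α : Type} (g : α → StratF.Obj α) (x : α) (lab : Agent ⊕ Choice) (a b : α)
    (h : g x = ⟨Sum.inr lab, fun i : Bool => if i then a else b⟩) :
    PFunctor.M.corec g x = stnode lab (PFunctor.M.corec g a) (PFunctor.M.corec g b) := by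
  rw [corec_eq, h]; unfold stnode; congr 1
  simp only [PFunctor.map]; congr 1
  funext i; cases i <;> rfl

lemma sleaf_corec {α : Type} (g : α → StratProfF.Obj α) (x : α) (f : Payoffs)
    (h : g x = ⟨Sum.inl f, fun e => e.elim⟩) :
    PFunctor.M.corec g x = sleaf f := by
  rw [corec_eq, h]; unfold sleaf; congr 1
  simp only [PFunctor.map]; congr 1
  funext e; exact e.elim

lemma snode_corec {α : Type} (g : α → StratProfF.Obj α) (x : α) (p : Agent) (c : Choice)
    (a b : α)
    (h : g x = ⟨Sum.inr (p, c), fun i : Bool => if i then a else b⟩) :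
    PFunctor.M.corec g x = snode p c (PFunctor.M.corec g a) (PFunctor.M.corec g b) := by
  rw [corec_eq, h]; unfold snode; congr 1
  simp only [PFunctor.map]; congr 1
  funext i; cases i <;> rfl

lemma gleaf_corec {α : Type} (g : α → GameF.Obj α) (x : α) (f : Payoffs)
    (h : g x = ⟨Sum.inl f, fun e => e.elim⟩) :
    PFunctor.M.corec g x = gleaf f := by
  rw [corec_eq, h]; unfold gleaf; congr 1
  simp only [PFunctor.map]; congr 1
  funext e; exact e.elim

lemma gnode_corec {α : Type} (g : α → GameF.Obj α) (x : α) (p : Agent) (a b : α)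
    (h : g x = ⟨Sum.inr p, fun i : Bool => if i then a else b⟩) :
    PFunctor.M.corec g x = gnode p (PFunctor.M.corec g a) (PFunctor.M.corec g b) := by
  rw [corec_eq, h]; unfold gnode; congr 1
  simp only [PFunctor.map]; congr 1
  funext i; cases i <;> rfl

/-! ### Basic structure lemmas -/

lemma sleaf_ne_snode (f : Payoffs) (p : Agent) (c : Choice) (sd sr : StratProf) :
    sleaf f ≠ snode p c sd sr := by
  intro h
  have h' := congrArg (fun t => (PFunctor.M.dest t).1) h
  simp only [sleaf, snode, PFunctor.M.dest_mk] at h'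
  erw [PFunctor.M.dest_mk, PFunctor.M.dest_mk] at h'
  exact Sum.inl_ne_inr h'

lemma snode_inj {p p' : Agent} {c c' : Choice} {sd sr sd' sr' : StratProf}
    (h : snode p c sd sr = snode p' c' sd' sr') :
    p = p' ∧ c = c' ∧ sd = sd' ∧ sr = sr' := by
  have h' := congrArg PFunctor.M.dest h
  simp only [snode, PFunctor.M.dest_mk] at h'
  obtain ⟨h1, h2⟩ := Sigma.mk.inj_iff.mp h'
  obtain ⟨hp, hc⟩ := Prod.mk.inj (Sum.inr.inj h1)
  subst hp; subst hc
  have h2 : (fun i : Bool => if i then sd else sr) = fun i : Bool => if i then sd' else sr' :=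
    eq_of_heq h2
  refine ⟨rfl, rfl, ?_, ?_⟩
  · have := congrFun h2 true; simpa using this
  · have := congrFun h2 false; simpa using this

/-! ### Equations for the escalation strategies -/

noncomputable def Ast (n : ℕ) : Strat := PFunctor.M.corec stAinfStep n
noncomputable def Bst (n : ℕ) : Strat := PFunctor.M.corec stBinfStep n

lemma Ast0eq : Ast 0 = stnode (Sum.inr Choice.r) (Ast 2) (Ast 1) :=
  stnode_corec _ _ _ _ _ rfl
lemma Ast1eq : Ast 1 = stnode (Sum.inl Agent.B) (Ast 3) (Ast 0) :=
  stnode_corec _ _ _ _ _ rfl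
lemma Ast2eq : Ast 2 = stleaf f01 := stleaf_corec _ _ _ rfl
lemma Ast3eq (n : ℕ) : Ast (n + 3) = stleaf f10 := stleaf_corec _ _ _ rfl

lemma Bst0eq : Bst 0 = stnode (Sum.inl Agent.A) (Bst 2) (Bst 1) :=
  stnode_corec _ _ _ _ _ rfl
lemma Bst1eq : Bst 1 = stnode (Sum.inr Choice.r) (Bst 3) (Bst 0) :=
  stnode_corec _ _ _ _ _ rfl
lemma Bst2eq : Bst 2 = stleaf f01 := stleaf_corec _ _ _ rfl
lemma Bst3eq (n : ℕ) : Bst (n + 3) = stleaf f10 := stleaf_corec _ _ _ rfl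

/-! ### Fullness -/

lemma full_A_stAinf : Full Agent.A stAinf := by
  refine ⟨fun t => ∃ n, t = Ast n, ⟨0, rfl⟩, ?_⟩
  rintro t ⟨n, rfl⟩
  match n with
  | 0 =>
      exact Or.inr ⟨Sum.inr Choice.r, Ast 2, Ast 1, Ast0eq, by simp, ⟨2, rfl⟩, ⟨1, rfl⟩⟩
  | 1 =>
      exact Or.inr ⟨Sum.inl Agent.B, Ast 3, Ast 0, Ast1eq,
        fun h => Agent.noConfusion (Sum.inl.inj h), ⟨3, rfl⟩, ⟨0, rfl⟩⟩
  | 2 => exact Or.inl ⟨f01, Ast2eq⟩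
  | (n + 3) => exact Or.inl ⟨f10, Ast3eq n⟩

lemma full_B_stBinf : Full Agent.B stBinf := by
  refine ⟨fun t => ∃ n, t = Bst n, ⟨0, rfl⟩, ?_⟩
  rintro t ⟨n, rfl⟩
  match n with
  | 0 =>
      exact Or.inr ⟨Sum.inl Agent.A, Bst 2, Bst 1, Bst0eq,
        fun h => Agent.noConfusion (Sum.inl.inj h), ⟨2, rfl⟩, ⟨1, rfl⟩⟩
  | 1 =>
      exact Or.inr ⟨Sum.inr Choice.r, Bst 3, Bst 0, Bst1eq, by simp, ⟨3, rfl⟩, ⟨0, rfl⟩⟩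
  | 2 => exact Or.inl ⟨f01, Bst2eq⟩
  | (n + 3) => exact Or.inl ⟨f10, Bst3eq n⟩

/-! ### st2g computations -/

lemma st2g_stleaf (f : Payoffs) (p : Agent) : st2g (stleaf f) p = gleaf f := by
  refine gleaf_corec _ _ _ ?_
  rfl

lemma st2g_stnode_agent (q : Agent) (s1 s2 : Strat) (p : Agent) :
    st2g (stnode (Sum.inl q) s1 s2) p = gnode q (st2g s1 p) (st2g s2 p) := by
  refine gnode_corec _ _ _ s1 s2 ?_
  show st2gStep p (stnode (Sum.inl q) s1 s2) = _
  rfl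

lemma st2g_stnode_choice (c : Choice) (s1 s2 : Strat) (p : Agent) :
    st2g (stnode (Sum.inr c) s1 s2) p = gnode p (st2g s1 p) (st2g s2 p) := by
  refine gnode_corec _ _ _ s1 s2 ?_
  show st2gStep p (stnode (Sum.inr c) s1 s2) = _
  rfl

/-! ### Equations for g01 -/

lemma g01eq : g01 = gnode Agent.A (gleaf f01) g10 := by
  have h1 : PFunctor.M.corec g01Step (Sum.inr true) = gleaf f01 := gleaf_corec _ _ _ rfl
  have := gnode_corec g01Step (Sum.inl true) Agent.A (Sum.inr true) (Sum.inl false) rfl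
  rw [g01, this, h1]; rfl

lemma g10eq : g10 = gnode Agent.B (gleaf f10) g01 := by
  have h1 : PFunctor.M.corec g01Step (Sum.inr false) = gleaf f10 := gleaf_corec _ _ _ rfl
  have := gnode_corec g01Step (Sum.inl false) Agent.B (Sum.inr false) (Sum.inl true) rfl
  rw [g10, this, h1]; rfl

/-- Characterization: any pair of games satisfying the 0,1-equations equals `(g01, g10)`. -/
lemma g01_char (x y : Game) (hx : x = gnode Agent.A (gleaf f01) y)
    (hy : y = gnode Agent.B (gleaf f10) x) : x = g01 := by
  apply PFunctor.M.bisim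
    (fun u v => (u = x ∧ v = g01) ∨ (u = y ∧ v = g10) ∨ u = v)
  · rintro u v (⟨rfl, rfl⟩ | ⟨rfl, rfl⟩ | rfl)
    · refine ⟨Sum.inr Agent.A,
        (fun i : Bool => if i then gleaf f01 else y),
        (fun i : Bool => if i then gleaf f01 else g10), ?_, ?_, ?_⟩
      · rw [hx]; rfl
      · rw [g01eq]; rfl
      · intro i; cases i
        · exact Or.inr (Or.inl ⟨rfl, rfl⟩)
        · exact Or.inr (Or.inr rfl)
    · refine ⟨Sum.inr Agent.B,
        (fun i : Bool => if i then gleaf f10 else x),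
        (fun i : Bool => if i then gleaf f10 else g01), ?_, ?_, ?_⟩
      · rw [hy]; rfl
      · rw [g10eq]; rfl
      · intro i; cases i
        · exact Or.inl ⟨rfl, rfl⟩
        · exact Or.inr (Or.inr rfl)
    · exact ⟨(PFunctor.M.dest u).1, (PFunctor.M.dest u).2, (PFunctor.M.dest u).2,
        rfl, rfl, fun i => Or.inr (Or.inr rfl)⟩
  · exact Or.inl ⟨rfl, rfl⟩

lemma st2g_stAinf : st2g stAinf Agent.A = g01 := by
  have hx : st2g (Ast 0) Agent.A
      = gnode Agent.A (gleaf f01) (st2g (Ast 1) Agent.A) := by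
    rw [Ast0eq, st2g_stnode_choice, Ast2eq, st2g_stleaf]
  have hy : st2g (Ast 1) Agent.A
      = gnode Agent.B (gleaf f10) (st2g (Ast 0) Agent.A) := by
    rw [Ast1eq, st2g_stnode_agent, Ast3eq 0, st2g_stleaf]
  exact g01_char _ _ hx hy

lemma st2g_stBinf : st2g stBinf Agent.B = g01 := by
  have hx : st2g (Bst 0) Agent.B
      = gnode Agent.A (gleaf f01) (st2g (Bst 1) Agent.B) := by
    rw [Bst0eq, st2g_stnode_agent, Bst2eq, st2g_stleaf]
  have hy : st2g (Bst 1) Agent.B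
      = gnode Agent.B (gleaf f10) (st2g (Bst 0) Agent.B) := by
    rw [Bst1eq, st2g_stnode_choice, Bst3eq 0, st2g_stleaf]
  exact g01_char _ _ hx hy

/-! ### The sum of the escalation strategies and non-convergence -/

noncomputable def OO (q : Strat × Strat) : StratProf := PFunctor.M.corec oplusStep q

lemma O0eq : OO (Ast 0, Bst 0) = snode Agent.A Choice.r (sleaf f01) (OO (Ast 1, Bst 1)) := by
  have h : OO (Ast 0, Bst 0)
      = snode Agent.A Choice.r (OO (Ast 2, Bst 2)) (OO (Ast 1, Bst 1)) := by
    refine snode_corec _ _ _ _ _ _ ?_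
    rw [show (Ast 0, Bst 0) = (stnode (Sum.inr Choice.r) (Ast 2) (Ast 1),
      stnode (Sum.inl Agent.A) (Bst 2) (Bst 1)) by rw [Ast0eq, Bst0eq]]
    show (⟨Sum.inr (Agent.A, Choice.r),
      fun i : Bool => ((if i then Ast 2 else Ast 1), (if i then Bst 2 else Bst 1))⟩ :
        StratProfF.Obj (Strat × Strat)) = _
    congr 1; funext i; cases i <;> rfl
  have h2 : OO (Ast 2, Bst 2) = sleaf f01 := by
    refine sleaf_corec _ _ _ ?_
    rw [show (Ast 2, Bst 2) = (stleaf f01, stleaf f01) by rw [Ast2eq, Bst2eq]]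
    rfl
  rw [h, h2]

lemma O1eq : OO (Ast 1, Bst 1) = snode Agent.B Choice.r (sleaf f10) (OO (Ast 0, Bst 0)) := by
  have h : OO (Ast 1, Bst 1)
      = snode Agent.B Choice.r (OO (Ast 3, Bst 3)) (OO (Ast 0, Bst 0)) := by
    refine snode_corec _ _ _ _ _ _ ?_
    rw [show (Ast 1, Bst 1) = (stnode (Sum.inl Agent.B) (Ast 3) (Ast 0),
      stnode (Sum.inr Choice.r) (Bst 3) (Bst 0)) by rw [Ast1eq, Bst1eq]]
    show (⟨Sum.inr (Agent.B, Choice.r),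
      fun i : Bool => ((if i then Ast 3 else Ast 0), (if i then Bst 3 else Bst 0))⟩ :
        StratProfF.Obj (Strat × Strat)) = _
    congr 1; funext i; cases i <;> rfl
  have h2 : OO (Ast 3, Bst 3) = sleaf f10 := by
    refine sleaf_corec _ _ _ ?_
    rw [show (Ast 3, Bst 3) = (stleaf f10, stleaf f10) by rw [Ast3eq 0, Bst3eq 0]]
    rfl
  rw [h, h2]

lemma conv_ne : ∀ s, Conv s → s ≠ OO (Ast 0, Bst 0) ∧ s ≠ OO (Ast 1, Bst 1) := by
  intro s h
  induction h with
  | leaf f =>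
      constructor
      · rw [O0eq]; exact sleaf_ne_snode _ _ _ _ _
      · rw [O1eq]; exact sleaf_ne_snode _ _ _ _ _
  | down p sd sr hc ih =>
      constructor
      · rw [O0eq]; intro hE
        exact Choice.noConfusion (snode_inj hE).2.1
      · rw [O1eq]; intro hE
        exact Choice.noConfusion (snode_inj hE).2.1
  | right p sd sr hc ih =>
      constructor
      · rw [O0eq]; intro hE
        exact ih.2 (snode_inj hE).2.2.2
      · rw [O1eq]; intro hE
        exact ih.1 (snode_inj hE).2.2.2

/-- escalation occurs in the 0,1-game. -/
theorem escalation :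
    ∃ stA stB : Strat, Full Agent.A stA ∧ Full Agent.B stB ∧
      st2g stA Agent.A = g01 ∧ st2g stB Agent.B = g01 ∧ ¬ Conv (oplus stA stB) := by
  refine ⟨stAinf, stBinf, full_A_stAinf, full_B_stBinf, st2g_stAinf, st2g_stBinf, ?_⟩
  intro h
  have : oplus stAinf stBinf = OO (Ast 0, Bst 0) := rfl
  exact (conv_ne _ h).1 this
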